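/- For real numbers l and a with 0 < a < l, the double integral ∫_{0}^{π/2} ∫_{0}^{π} min(a, l·sin ψ·|cos φ|) dφ dψ equals 2l − 2l·F(arcsin(a/l), π/2, a/l) + 2a·G(arcsin(a/l), π/2, a/l). -/

import Mathlib

open Real MeasureTheory Filter


/-- `A(l,a) = ∫_0^π min(a, l·|cos φ|) dφ` -/
noncomputable def A2 (l a : ℝ) : ℝ := ∫ φ in (0:ℝ)..π, min a (l * |Real.cos φ|)

/-- `B(l,b) = ∫_0^π min(b, l·sin φ) dφ` -/
noncomputable def B2 (l b : ℝ) : ℝ := ∫ φ in (0:ℝ)..π, min b (l * Real.sin φ)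

/-- `AB(l,a,b) = ∫_0^π min(a, l·|cos φ|)·min(b, l·sin φ) dφ` -/
noncomputable def AB2 (l a b : ℝ) : ℝ :=
  ∫ φ in (0:ℝ)..π, min a (l * |Real.cos φ|) * min b (l * Real.sin φ)

/-- Intersection probability for the 2D Buffon–Laplace needle problem. -/
noncomputable def P2 (l a b : ℝ) : ℝ :=
  (b * A2 l a + a * B2 l b - AB2 l a b) / (π * a * b)

/-- Intersection probability for the 2D spherocylinder Buffon–Laplace problem. -/
noncomputable def P2sc (l σ a b : ℝ) : ℝ :=
  ((b - σ) * A2 l (a - σ) + (a - σ) * B2 l (b - σ) - AB2 l (a - σ) (b - σ)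
    + (σ * a + σ * b - σ ^ 2) * π) / (π * a * b)

/-- `A³ᴰ(l,a) = ∫_0^{π/2} ∫_0^π min(a, l·sin ψ·|cos φ|) dφ dψ` -/
noncomputable def A3 (l a : ℝ) : ℝ :=
  ∫ ψ in (0:ℝ)..(π/2), ∫ φ in (0:ℝ)..π, min a (l * Real.sin ψ * |Real.cos φ|)

/-- `B³ᴰ(l,b) = ∫_0^{π/2} ∫_0^π min(b, l·sin ψ·sin φ) dφ dψ` -/
noncomputable def B3 (l b : ℝ) : ℝ :=
  ∫ ψ in (0:ℝ)..(π/2), ∫ φ in (0:ℝ)..π, min b (l * Real.sin ψ * Real.sin φ)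

/-- `AB³ᴰ(l,a,b) = ∫_0^{π/2} ∫_0^π min(a, l·sin ψ·|cos φ|)·min(b, l·sin ψ·sin φ) dφ dψ` -/
noncomputable def AB3 (l a b : ℝ) : ℝ :=
  ∫ ψ in (0:ℝ)..(π/2), ∫ φ in (0:ℝ)..π,
    min a (l * Real.sin ψ * |Real.cos φ|) * min b (l * Real.sin ψ * Real.sin φ)

/-- `S³ᴰ(l,a,b) = b·A³ᴰ(l,a) + a·B³ᴰ(l,b) − AB³ᴰ(l,a,b)` -/
noncomputable def S3 (l a b : ℝ) : ℝ := b * A3 l a + a * B3 l b - AB3 l a b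

/-- `F(α,β,t) = ∫_α^β √(sin²ψ − t²) dψ` -/
noncomputable def Faux (α β t : ℝ) : ℝ :=
  ∫ ψ in α..β, Real.sqrt (Real.sin ψ ^ 2 - t ^ 2)

/-- `G(α,β,t) = ∫_α^β (π/2 − arcsin(t / sin ψ)) dψ` -/
noncomputable def Gaux (α β t : ℝ) : ℝ :=
  ∫ ψ in α..β, (π / 2 - Real.arcsin (t / Real.sin ψ))


private lemma half_int (f : ℝ → ℝ) (hf : ∀ x, f (π - x) = f x) (hcont : Continuous f) :
    (∫ φ in (0:ℝ)..π, f φ) = 2 * ∫ φ in (0:ℝ)..(π/2), f φ := by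
  have h := intervalIntegral.integral_comp_sub_left (a := 0) (b := π/2) f π
  simp only [hf, sub_zero] at h
  rw [show π - π/2 = π/2 by ring] at h
  rw [← intervalIntegral.integral_add_adjacent_intervals
    (hcont.intervalIntegrable 0 (π/2)) (hcont.intervalIntegrable (π/2) π), ← h]
  ring

private lemma inner_le (a c : ℝ) (hc : 0 ≤ c) (h : c ≤ a) :
    (∫ φ in (0:ℝ)..π, min a (c * |Real.cos φ|)) = 2 * c := by
  have hcont : Continuous fun φ : ℝ => min a (c * |Real.cos φ|) :=
    continuous_const.min (continuous_const.mul Real.continuous_cos.abs)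
  rw [half_int _ (fun x => by rw [Real.cos_pi_sub, abs_neg]) hcont]
  have heq : ∀ φ ∈ Set.uIcc (0:ℝ) (π/2),
      min a (c * |Real.cos φ|) = c * Real.cos φ := by
    intro φ hφ
    rw [Set.uIcc_of_le (by positivity)] at hφ
    have hc0 : 0 ≤ Real.cos φ :=
      Real.cos_nonneg_of_mem_Icc ⟨by linarith [hφ.1, Real.pi_pos], hφ.2⟩
    rw [abs_of_nonneg hc0]
    exact min_eq_right (by nlinarith [Real.cos_le_one φ])
  rw [intervalIntegral.integral_congr heq, intervalIntegral.integral_const_mul,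
    integral_cos]
  simp [Real.sin_pi_div_two]

private lemma inner_ge (a c : ℝ) (ha : 0 < a) (h : a ≤ c) :
    (∫ φ in (0:ℝ)..π, min a (c * |Real.cos φ|))
      = 2 * (a * Real.arccos (a / c) + c - Real.sqrt (c ^ 2 - a ^ 2)) := by
  have hc : 0 < c := lt_of_lt_of_le ha h
  set x := a / c with hx
  have hx0 : 0 < x := div_pos ha hc
  have hx1 : x ≤ 1 := div_le_one_of_le₀ h hc.le
  set φ₀ := Real.arccos x with hφ₀
  have hφ₀0 : 0 ≤ φ₀ := Real.arccos_nonneg x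
  have hφ₀2 : φ₀ ≤ π/2 := Real.arccos_le_pi_div_two.mpr hx0.le
  have hcos : Real.cos φ₀ = x := Real.cos_arccos (by linarith) hx1
  have hcont : Continuous fun φ : ℝ => min a (c * |Real.cos φ|) :=
    continuous_const.min (continuous_const.mul Real.continuous_cos.abs)
  rw [half_int _ (fun y => by rw [Real.cos_pi_sub, abs_neg]) hcont]
  rw [← intervalIntegral.integral_add_adjacent_intervals
    (hcont.intervalIntegrable 0 φ₀) (hcont.intervalIntegrable φ₀ (π/2))]
  have e1 : (∫ φ in (0:ℝ)..φ₀, min a (c * |Real.cos φ|)) = ∫ _ in (0:ℝ)..φ₀, a := by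
    apply intervalIntegral.integral_congr
    intro φ hφ
    show min a (c * |Real.cos φ|) = a
    rw [Set.uIcc_of_le hφ₀0] at hφ
    have hcc : Real.cos φ₀ ≤ Real.cos φ :=
      Real.cos_le_cos_of_nonneg_of_le_pi hφ.1 (by linarith [Real.pi_pos]) hφ.2
    have hc0 : 0 ≤ Real.cos φ := le_trans (by rw [hcos]; exact hx0.le) hcc
    rw [abs_of_nonneg hc0]
    apply min_eq_left
    have : a = c * x := by rw [hx]; field_simp
    nlinarith [hcos]
  have e2 : (∫ φ in φ₀..(π/2), min a (c * |Real.cos φ|))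
      = ∫ φ in φ₀..(π/2), c * Real.cos φ := by
    apply intervalIntegral.integral_congr
    intro φ hφ
    show min a (c * |Real.cos φ|) = c * Real.cos φ
    rw [Set.uIcc_of_le hφ₀2] at hφ
    have hc0 : 0 ≤ Real.cos φ :=
      Real.cos_nonneg_of_mem_Icc ⟨by linarith [hφ₀0, hφ.1, Real.pi_pos], hφ.2⟩
    have hcc : Real.cos φ ≤ Real.cos φ₀ :=
      Real.cos_le_cos_of_nonneg_of_le_pi hφ₀0 (by linarith [Real.pi_pos, hφ.2]) hφ.1
    rw [abs_of_nonneg hc0]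
    apply min_eq_right
    rw [hcos] at hcc
    have : c * x = a := by rw [hx]; field_simp
    nlinarith
  rw [e1, e2, intervalIntegral.integral_const, intervalIntegral.integral_const_mul,
    integral_cos]
  have hsin : Real.sin φ₀ = Real.sqrt (1 - x ^ 2) := Real.sin_arccos x
  have hsqrt : c * Real.sqrt (1 - x ^ 2) = Real.sqrt (c ^ 2 - a ^ 2) := by
    conv_lhs => rw [← Real.sqrt_sq hc.le, ← Real.sqrt_mul (by positivity)]
    congr 1
    have hca : x * c = a := by rw [hx]; field_simp
    linear_combination (-(a + x * c)) * hca
  rw [Real.sin_pi_div_two, hsin, ← hsqrt, smul_eq_mul]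
  ring

theorem stmt13' (l a : ℝ) (ha : 0 < a) (hal : a < l) :
    (∫ ψ in (0:ℝ)..(π/2), ∫ φ in (0:ℝ)..π, min a (l * Real.sin ψ * |Real.cos φ|))
      = 2 * l - 2 * l * (∫ ψ in Real.arcsin (a/l)..(π/2), Real.sqrt (Real.sin ψ ^ 2 - (a/l) ^ 2))
      + 2 * a * (∫ ψ in Real.arcsin (a/l)..(π/2), (π / 2 - Real.arcsin ((a/l) / Real.sin ψ))) := by
  have hl : 0 < l := lt_trans ha hal
  set t := a / l with htdef
  have ht0 : 0 < t := div_pos ha hl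
  have ht1 : t < 1 := (div_lt_one hl).mpr hal
  set α := Real.arcsin t with hαdef
  have hα0 : 0 < α := Real.arcsin_pos.mpr ht0
  have hα2 : α < π / 2 := Real.arcsin_lt_pi_div_two.mpr ht1
  have hsinα : Real.sin α = t := Real.sin_arcsin (by linarith) ht1.le
  have hlt : l * t = a := by rw [htdef]; field_simp
  set inner : ℝ → ℝ := fun ψ => ∫ φ in (0:ℝ)..π, min a (l * Real.sin ψ * |Real.cos φ|)
    with hinner
  -- closed forms
  set g1 : ℝ → ℝ := fun ψ => 2 * l * Real.sin ψ with hg1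
  set g2 : ℝ → ℝ := fun ψ => 2 * l * Real.sin ψ
      + 2 * a * (π / 2 - Real.arcsin (t / Real.sin ψ))
      - 2 * l * Real.sqrt (Real.sin ψ ^ 2 - t ^ 2) with hg2
  have heq1 : ∀ ψ ∈ Set.uIcc (0:ℝ) α, inner ψ = g1 ψ := by
    intro ψ hψ
    rw [Set.uIcc_of_le hα0.le] at hψ
    have hs0 : 0 ≤ Real.sin ψ :=
      Real.sin_nonneg_of_nonneg_of_le_pi hψ.1 (by linarith [Real.pi_pos, hψ.2])
    have hst : Real.sin ψ ≤ t := by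
      rw [← hsinα]
      exact Real.sin_le_sin_of_le_of_le_pi_div_two (by linarith [Real.pi_pos, hψ.1]) hα2.le hψ.2
    show (∫ φ in (0:ℝ)..π, min a (l * Real.sin ψ * |Real.cos φ|)) = 2 * l * Real.sin ψ
    rw [inner_le a (l * Real.sin ψ) (by positivity) (by nlinarith)]; ring
  have heq2 : ∀ ψ ∈ Set.uIcc α (π/2), inner ψ = g2 ψ := by
    intro ψ hψ
    rw [Set.uIcc_of_le hα2.le] at hψ
    have hst : t ≤ Real.sin ψ := by
      rw [← hsinα]
      exact Real.sin_le_sin_of_le_of_le_pi_div_two (by linarith [Real.pi_pos, hα0]) hψ.2 hψ.1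
    have hs0 : 0 < Real.sin ψ := lt_of_lt_of_le ht0 hst
    have hac : a ≤ l * Real.sin ψ := by nlinarith
    show (∫ φ in (0:ℝ)..π, min a (l * Real.sin ψ * |Real.cos φ|))
      = 2 * l * Real.sin ψ + 2 * a * (π / 2 - Real.arcsin (t / Real.sin ψ))
        - 2 * l * Real.sqrt (Real.sin ψ ^ 2 - t ^ 2)
    rw [inner_ge a (l * Real.sin ψ) ha hac]
    have harg : a / (l * Real.sin ψ) = t / Real.sin ψ := by
      rw [htdef, div_div]
    have hsq : Real.sqrt ((l * Real.sin ψ) ^ 2 - a ^ 2)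
        = l * Real.sqrt (Real.sin ψ ^ 2 - t ^ 2) := by
      rw [show (l * Real.sin ψ) ^ 2 - a ^ 2 = l ^ 2 * (Real.sin ψ ^ 2 - t ^ 2) by
        linear_combination (l * t + a) * hlt, Real.sqrt_mul (by positivity), Real.sqrt_sq hl.le]
    rw [harg, hsq, show Real.arccos (t / Real.sin ψ) = π/2 - Real.arcsin (t / Real.sin ψ)
      from rfl]
    ring
  -- continuity of closed forms
  have hcont1 : Continuous g1 := by continuity
  have hcontsin : ContinuousOn (fun ψ => Real.sin ψ) (Set.uIcc α (π/2)) :=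
    Real.continuous_sin.continuousOn
  have hsinne : ∀ ψ ∈ Set.uIcc α (π/2), Real.sin ψ ≠ 0 := by
    intro ψ hψ
    rw [Set.uIcc_of_le hα2.le] at hψ
    exact ne_of_gt (Real.sin_pos_of_pos_of_lt_pi (lt_of_lt_of_le hα0 hψ.1)
      (lt_of_le_of_lt hψ.2 (by linarith [Real.pi_pos])))
  have hcontg2' : ContinuousOn (fun ψ => π / 2 - Real.arcsin (t / Real.sin ψ))
      (Set.uIcc α (π/2)) :=
    continuousOn_const.sub (Real.continuous_arcsin.comp_continuousOn
      (continuousOn_const.div hcontsin hsinne))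
  have hcontg3 : Continuous (fun ψ => Real.sqrt (Real.sin ψ ^ 2 - t ^ 2)) := by
    apply Real.continuous_sqrt.comp; continuity
  -- integrability of inner on the two pieces
  have hi1 : IntervalIntegrable inner volume 0 α :=
    ((hcont1.intervalIntegrable 0 α).congr
      (
        (fun x hx => (heq1 x (Set.uIoc_subset_uIcc hx)).symm)))
  have hi2 : IntervalIntegrable inner volume α (π/2) := by
    have hcg2 : ContinuousOn g2 (Set.uIcc α (π/2)) := by
      apply ContinuousOn.sub
      · exact (hcont1.continuousOn).add (continuousOn_const.mul hcontg2')
      · exact (continuous_const.mul hcontg3).continuousOn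
    exact (hcg2.intervalIntegrable.congr
      (
        (fun x hx => (heq2 x (Set.uIoc_subset_uIcc hx)).symm)))
  have key : (∫ ψ in (0:ℝ)..(π/2), inner ψ)
      = (∫ ψ in (0:ℝ)..α, inner ψ) + ∫ ψ in α..(π/2), inner ψ :=
    (intervalIntegral.integral_add_adjacent_intervals hi1 hi2).symm
  rw [show (∫ ψ in (0:ℝ)..(π/2), ∫ φ in (0:ℝ)..π, min a (l * Real.sin ψ * |Real.cos φ|))
      = ∫ ψ in (0:ℝ)..(π/2), inner ψ from rfl, key,
    intervalIntegral.integral_congr heq1, intervalIntegral.integral_congr heq2]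
  -- compute the pieces
  have v1 : (∫ ψ in (0:ℝ)..α, g1 ψ) = 2 * l * (1 - Real.cos α) := by
    show (∫ ψ in (0:ℝ)..α, 2 * l * Real.sin ψ) = _
    rw [intervalIntegral.integral_const_mul, integral_sin, Real.cos_zero]
  have isub1 : IntervalIntegrable (fun ψ => 2 * l * Real.sin ψ
      + 2 * a * (π / 2 - Real.arcsin (t / Real.sin ψ))) volume α (π/2) :=
    ((hcont1.continuousOn).add (continuousOn_const.mul hcontg2')).intervalIntegrable
  have isub2 : IntervalIntegrable (fun ψ => 2 * l * Real.sqrt (Real.sin ψ ^ 2 - t ^ 2))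
      volume α (π/2) := (continuous_const.mul hcontg3).intervalIntegrable α (π/2)
  have iadd1 : IntervalIntegrable (fun ψ => 2 * l * Real.sin ψ) volume α (π/2) :=
    hcont1.intervalIntegrable α (π/2)
  have iadd2 : IntervalIntegrable (fun ψ => 2 * a * (π / 2 - Real.arcsin (t / Real.sin ψ)))
      volume α (π/2) := (continuousOn_const.mul hcontg2').intervalIntegrable
  have v2 : (∫ ψ in α..(π/2), g2 ψ)
      = (∫ ψ in α..(π/2), 2 * l * Real.sin ψ)
        + (∫ ψ in α..(π/2), 2 * a * (π / 2 - Real.arcsin (t / Real.sin ψ)))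
        - ∫ ψ in α..(π/2), 2 * l * Real.sqrt (Real.sin ψ ^ 2 - t ^ 2) := by
    show (∫ ψ in α..(π/2), (2 * l * Real.sin ψ
        + 2 * a * (π / 2 - Real.arcsin (t / Real.sin ψ))
        - 2 * l * Real.sqrt (Real.sin ψ ^ 2 - t ^ 2))) = _
    rw [intervalIntegral.integral_sub isub1 isub2, intervalIntegral.integral_add iadd1 iadd2]
  have v3 : (∫ ψ in α..(π/2), 2 * l * Real.sin ψ) = 2 * l * Real.cos α := by
    rw [intervalIntegral.integral_const_mul, integral_sin,
      Real.cos_pi_div_two]; ring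
  rw [v1, v2, v3, intervalIntegral.integral_const_mul, intervalIntegral.integral_const_mul]
  ring

theorem stmt13 (l a : ℝ) (ha : 0 < a) (hal : a < l) :
    A3 l a = 2 * l - 2 * l * Faux (Real.arcsin (a / l)) (π / 2) (a / l)
      + 2 * a * Gaux (Real.arcsin (a / l)) (π / 2) (a / l) := by
  rw [A3, Faux, Gaux]
  exact stmt13' l a ha hal
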